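/- Let (X,σ) be a shift space whose language 𝓛 admits a decomposition 𝓛 = 𝓒^p 𝓖 𝓒^s satisfying Conditions (I) and (II), where 𝓖 has (Per)-specification. Then lim_{n→∞} (1/n) log #Per(n) = h(𝓛) = h_top(X,σ). -/

import Mathlib

open MeasureTheory Filter Topology
open scoped ENNReal

/-- The full two-sided shift on `p` symbols. -/
abbrev FullShift (p : ℕ) : Type := ℤ → Fin p

/-- The left shift map. -/
def shiftMap {p : ℕ} : FullShift p → FullShift p := fun x n => x (n + 1)

/-- A (two-sided) shift space: a nonempty closed shift-invariant subset of the full shift. -/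
def IsShiftSpace {p : ℕ} (X : Set (FullShift p)) : Prop :=
  X.Nonempty ∧ IsClosed X ∧ shiftMap '' X = X

/-- `x` spells the word `w` starting at position `k`. -/
def spellsAt {p : ℕ} (x : FullShift p) (k : ℤ) (w : List (Fin p)) : Prop :=
  ∀ i : Fin w.length, x (k + (i : ℕ)) = w.get i

/-- The language of a shift space: all finite words occurring in its sequences. -/
def language {p : ℕ} (X : Set (FullShift p)) : Set (List (Fin p)) :=
  {w | ∃ x ∈ X, ∃ k : ℤ, spellsAt x k w}

/-- Words of length `n` in a collection `D`. -/
def wordsOfLen {p : ℕ} (D : Set (List (Fin p))) (n : ℕ) : Set (List (Fin p)) :=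
  {w ∈ D | w.length = n}

/-- Exponential growth rate `h(D) = limsup (1/n) log #D_n` of a collection of words. -/
noncomputable def growth {p : ℕ} (D : Set (List (Fin p))) : ℝ :=
  Filter.atTop.limsup fun n : ℕ => Real.log ((wordsOfLen D n).ncard) / n

/-- Topological entropy of a shift space (= the growth rate of its language). -/
noncomputable def htop {p : ℕ} (X : Set (FullShift p)) : ℝ := growth (language X)

/-- `glueWords m w v = w 0 ++ v 0 ++ w 1 ++ v 1 ++ ⋯ ++ v (m-1) ++ w m`. -/
def glueWords {p : ℕ} : ℕ → (ℕ → List (Fin p)) → (ℕ → List (Fin p)) → List (Fin p)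
  | 0, w, _ => w 0
  | (m + 1), w, v => glueWords m w v ++ v m ++ w (m + 1)

/-- (S)-specification on `G ⊆ L` with gap size `t`. -/
def HasSpecS {p : ℕ} (L G : Set (List (Fin p))) (t : ℕ) : Prop :=
  ∀ (m : ℕ) (w : ℕ → List (Fin p)), (∀ i ≤ m, w i ∈ G) →
    ∃ v : ℕ → List (Fin p), (∀ i < m, v i ∈ L ∧ (v i).length = t) ∧
      glueWords m w v ∈ L

/-- The central cylinder of a word `w`, starting at position `-⌊|w|/2⌋`. -/
def centralCylinder {p : ℕ} (w : List (Fin p)) : Set (FullShift p) :=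
  {x | spellsAt x (-((w.length / 2 : ℕ) : ℤ)) w}

/-- (Per)-specification on `G` with gap size `t`: the glued word can moreover be realized by
a periodic point of period exactly `|x| + t`. -/
def HasSpecPer {p : ℕ} (X : Set (FullShift p)) (G : Set (List (Fin p))) (t : ℕ) : Prop :=
  ∀ (m : ℕ) (w : ℕ → List (Fin p)), (∀ i ≤ m, w i ∈ G) →
    ∃ v : ℕ → List (Fin p), (∀ i < m, v i ∈ language X ∧ (v i).length = t) ∧
      glueWords m w v ∈ language X ∧
      ∃ z ∈ X, shiftMap^[(glueWords m w v).length + t] z = z ∧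
        z ∈ centralCylinder (glueWords m w v)

/-- A decomposition `L = 𝓒ᵖ 𝓖 𝓒ˢ` of a language. -/
def Decomp {p : ℕ} (L Cp G Cs : Set (List (Fin p))) : Prop :=
  Cp ⊆ L ∧ G ⊆ L ∧ Cs ⊆ L ∧
    ∀ w ∈ L, ∃ u v x, u ∈ Cp ∧ v ∈ G ∧ x ∈ Cs ∧ w = u ++ v ++ x

/-- `𝓖(M)`: words of `L` decomposable with prefix and suffix of length at most `M`. -/
def GM {p : ℕ} (L Cp G Cs : Set (List (Fin p))) (M : ℕ) : Set (List (Fin p)) :=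
  {w ∈ L | ∃ u v x, u ∈ Cp ∧ v ∈ G ∧ x ∈ Cs ∧ u.length ≤ M ∧ x.length ≤ M ∧ w = u ++ v ++ x}

/-- Condition (III): uniformly controlled extension of words of `𝓖(M)` to words of `𝓖`. -/
def CondIII {p : ℕ} (L Cp G Cs : Set (List (Fin p))) : Prop :=
  ∀ M : ℕ, ∃ τ : ℕ, ∀ v ∈ GM L Cp G Cs M,
    ∃ u w : List (Fin p), u.length ≤ τ ∧ w.length ≤ τ ∧ u ++ v ++ w ∈ G

/-- Shift invariance of a measure. -/
def ShiftInvariant {p : ℕ} (μ : Measure (FullShift p)) : Prop :=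
  Measure.map shiftMap μ = μ

/-- Measure-theoretic (Kolmogorov–Sinai) entropy of a shift-invariant measure, computed via
the generating partitions into cylinders of length `n`. -/
noncomputable def entropyOf {p : ℕ} (μ : Measure (FullShift p)) : ℝ :=
  Filter.atTop.liminf fun n : ℕ =>
    (∑ w : Fin n → Fin p,
      Real.negMulLog (μ {x : FullShift p | ∀ i : Fin n, x ((i : ℕ) : ℤ) = w i}).toReal) / n

/-- `μ` is a measure of maximal entropy for the shift space `X`. -/
def IsMME {p : ℕ} (X : Set (FullShift p)) (μ : Measure (FullShift p)) : Prop :=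
  IsProbabilityMeasure μ ∧ ShiftInvariant μ ∧ μ X = 1 ∧ entropyOf μ = htop X

/-- A shift space is intrinsically ergodic if it has exactly one measure of maximal entropy. -/
def IntrinsicallyErgodic {p : ℕ} (X : Set (FullShift p)) : Prop :=
  ∃! μ : Measure (FullShift p), IsMME X μ

/-- The set of points of `X` periodic of period at most `n`. -/
def PerN {p : ℕ} (X : Set (FullShift p)) (n : ℕ) : Set (FullShift p) :=
  {x ∈ X | ∃ k, 1 ≤ k ∧ k ≤ n ∧ shiftMap^[k] x = x}

/-- The measure evenly distributed on the periodic points of period at most `n`. -/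
noncomputable def perMeasure {p : ℕ} (X : Set (FullShift p)) (n : ℕ) :
    Measure (FullShift p) :=
  (((PerN X n).ncard : ℝ≥0∞))⁻¹ •
    Measure.sum (fun x : (PerN X n) => Measure.dirac (x : FullShift p))

/-- Weak* convergence of a sequence of measures. -/
def WeakStarLimit {p : ℕ} (μs : ℕ → Measure (FullShift p)) (μ : Measure (FullShift p)) : Prop :=
  ∀ f : C(FullShift p, ℝ),
    Tendsto (fun n => ∫ x, f x ∂(μs n)) atTop (𝓝 (∫ x, f x ∂μ))

/-- `Y` is a subshift factor of `X`. -/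
def IsSubshiftFactor {p q : ℕ} (X : Set (FullShift p)) (Y : Set (FullShift q)) : Prop :=
  IsShiftSpace Y ∧ ∃ π : FullShift p → FullShift q,
    Continuous π ∧ π '' X = Y ∧ ∀ x ∈ X, π (shiftMap x) = shiftMap (π x)

section AuxCT

open Set Real

variable {p : ℕ}

lemma shift_iter_apply (k : ℕ) (x : FullShift p) (n : ℤ) :
    (shiftMap^[k] x) n = x (n + k) := by
  induction k generalizing x n with
  | zero => simp
  | succ k ih =>
    rw [Function.iterate_succ_apply, ih]
    show x (n + k + 1) = x (n + (k + 1 : ℕ))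
    congr 1
    push_cast
    ring

lemma periodic_mod {k : ℕ} (hk : 0 < k) {x : FullShift p} (hx : shiftMap^[k] x = x)
    (m : ℤ) : x m = x (m % k) := by
  have hx' : ∀ n : ℤ, x (n + k) = x n := by
    intro n
    conv_rhs => rw [← hx]
    rw [shift_iter_apply]
  have key : ∀ q : ℤ, ∀ j : ℤ, x (j + k * q) = x j := by
    intro q
    induction q using Int.induction_on with
    | zero => simp
    | succ q ih =>
      intro j
      have e : j + (k : ℤ) * (q + 1) = (j + k * q) + k := by ring
      rw [e, hx', ih]
    | pred q ih =>
      intro j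
      have e : (j + (k : ℤ) * (-q - 1)) + k = j + k * (-(q : ℤ)) := by ring
      have h2 := hx' (j + (k : ℤ) * (-q - 1))
      rw [e] at h2
      rw [← h2] at *
      exact ih j
  have e2 : m % k + k * (m / k) = m := Int.emod_add_mul_ediv m k
  calc x m = x (m % k + k * (m / k)) := by rw [e2]
    _ = x (m % k) := key _ _

lemma periodic_determined {k : ℕ} (hk : 0 < k) {x y : FullShift p}
    (hx : shiftMap^[k] x = x) (hy : shiftMap^[k] y = y)
    (h : ∀ i : ℕ, i < k → x i = y i) : x = y := by
  funext m
  rw [periodic_mod hk hx m, periodic_mod hk hy m]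
  have h0 : 0 ≤ m % k := Int.emod_nonneg m (by exact_mod_cast hk.ne')
  have h1 : m % k < k := Int.emod_lt_of_pos m (by exact_mod_cast hk)
  have h2 : ((m % k).toNat : ℤ) = m % k := Int.toNat_of_nonneg h0
  rw [← h2]
  exact h _ (by omega)

lemma spellsAt_eq {x : FullShift p} {k : ℤ} {w w' : List (Fin p)}
    (h : spellsAt x k w) (h' : spellsAt x k w') (hl : w.length = w'.length) : w = w' := by
  apply List.ext_get hl
  intro i hi hi'
  rw [← h ⟨i, hi⟩, ← h' ⟨i, hi'⟩]

lemma word_mem_language {X : Set (FullShift p)} {x : FullShift p} (hx : x ∈ X) (k : ℤ) (n : ℕ) :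
    List.ofFn (fun i : Fin n => x (k + i)) ∈ wordsOfLen (language X) n := by
  refine ⟨⟨x, hx, k, ?_⟩, by simp⟩
  intro i
  rw [List.get_ofFn]
  simp

lemma wordsOfLen_finite (D : Set (List (Fin p))) (n : ℕ) : (wordsOfLen D n).Finite :=
  (List.finite_length_eq (Fin p) n).subset fun _ hw => hw.2

lemma wordsOfLen_ncard_le (D : Set (List (Fin p))) (n : ℕ) :
    (wordsOfLen D n).ncard ≤ p ^ n := by
  have h1 : wordsOfLen D n ⊆ Set.range (List.ofFn : (Fin n → Fin p) → _) := by
    intro w hw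
    have hl : w.length = n := hw.2
    subst hl
    exact ⟨w.get, List.ofFn_get w⟩
  calc (wordsOfLen D n).ncard ≤ (Set.range (List.ofFn : (Fin n → Fin p) → _)).ncard :=
        Set.ncard_le_ncard h1 (Set.finite_range _)
    _ ≤ (Set.univ : Set (Fin n → Fin p)).ncard := by
        rw [← Set.image_univ]
        exact Set.ncard_image_le Set.finite_univ
    _ = p ^ n := by
        rw [Set.ncard_univ, Nat.card_fun]
        simp

lemma one_le_ncard_language {X : Set (FullShift p)} (hX : X.Nonempty) (n : ℕ) :
    1 ≤ (wordsOfLen (language X) n).ncard := by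
  obtain ⟨x, hx⟩ := hX
  exact (Set.ncard_pos (wordsOfLen_finite _ n)).mpr ⟨_, word_mem_language hx 0 n⟩

lemma p_pos {X : Set (FullShift p)} (hX : X.Nonempty) : 0 < p := by
  obtain ⟨x, _⟩ := hX
  exact (x 0).pos

lemma glueWords_length (m : ℕ) (w v : ℕ → List (Fin p)) (n0 t : ℕ)
    (hw : ∀ i ≤ m, (w i).length = n0) (hv : ∀ i < m, (v i).length = t) :
    (glueWords m w v).length = (m + 1) * n0 + m * t := by
  induction m with
  | zero => simpa [glueWords] using hw 0 le_rfl
  | succ m ih =>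
    show ((glueWords m w v ++ v m) ++ w (m + 1)).length = _
    rw [List.length_append, List.length_append,
      ih (fun i hi => hw i (hi.trans (Nat.le_succ m))) (fun i hi => hv i (Nat.lt_succ_of_lt hi)),
      hv m (Nat.lt_succ_self m), hw (m + 1) le_rfl]
    ring

lemma glueWords_inj (m : ℕ) (w w' v v' : ℕ → List (Fin p))
    (hw : ∀ i ≤ m, (w i).length = (w' i).length)
    (hv : ∀ i < m, (v i).length = (v' i).length)
    (h : glueWords m w v = glueWords m w' v') : ∀ i ≤ m, w i = w' i := by
  induction m with
  | zero =>
    intro i hi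
    obtain rfl : i = 0 := Nat.le_zero.mp hi
    exact h
  | succ m ih =>
    have h1 : (glueWords m w v ++ v m) ++ w (m + 1)
        = (glueWords m w' v' ++ v' m) ++ w' (m + 1) := h
    obtain ⟨h2, h3⟩ := List.append_inj' h1 (hw (m + 1) le_rfl)
    obtain ⟨h4, _⟩ := List.append_inj' h2 (hv m (Nat.lt_succ_self m))
    intro i hi
    rcases Nat.lt_succ_iff_lt_or_eq.mp (Nat.lt_succ_of_le hi) with hlt | rfl
    · exact ih (fun j hj => hw j (hj.trans (Nat.le_succ m)))
        (fun j hj => hv j (Nat.lt_succ_of_lt hj)) h4 i (Nat.lt_succ_iff.mp hlt)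
    · exact h3

lemma centralCylinder_word_eq {z : FullShift p} {g g' : List (Fin p)}
    (h : z ∈ centralCylinder g) (h' : z ∈ centralCylinder g') (hl : g.length = g'.length) :
    g = g' := by
  have e : (-((g'.length / 2 : ℕ) : ℤ)) = (-((g.length / 2 : ℕ) : ℤ)) := by rw [hl]
  exact spellsAt_eq h (e ▸ h') hl

lemma ncard_biUnion_le {ι α : Type*} (s : Finset ι) (f : ι → Set α) :
    (⋃ i ∈ s, f i).ncard ≤ ∑ i ∈ s, (f i).ncard := by
  classical
  induction s using Finset.induction_on with
  | empty => simp
  | @insert a s ha ih =>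
    rw [Finset.set_biUnion_insert, Finset.sum_insert ha]
    exact le_trans (Set.ncard_union_le _ _) (Nat.add_le_add le_rfl ih)

lemma ncard_prod' {α β : Type*} (s : Set α) (t : Set β) :
    (s ×ˢ t).ncard = s.ncard * t.ncard := by
  rw [← Nat.card_coe_set_eq, ← Nat.card_coe_set_eq, ← Nat.card_coe_set_eq,
    ← Nat.card_prod]
  exact Nat.card_congr (Equiv.Set.prod s t)

def fixSet (X : Set (FullShift p)) (k : ℕ) : Set (FullShift p) := {x ∈ X | shiftMap^[k] x = x}

lemma fixSet_stuff (X : Set (FullShift p)) {k : ℕ} (hk : 0 < k) :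
    (fixSet X k).Finite ∧ (fixSet X k).ncard ≤ (wordsOfLen (language X) k).ncard := by
  set f : FullShift p → List (Fin p) := fun x => List.ofFn fun i : Fin k => x ((0 : ℤ) + i)
    with hf
  have hmaps : ∀ x ∈ fixSet X k, f x ∈ wordsOfLen (language X) k :=
    fun x hx => word_mem_language hx.1 0 k
  have hinj : Set.InjOn f (fixSet X k) := by
    intro x hx y hy hxy
    apply periodic_determined hk hx.2 hy.2
    intro i hi
    have := congrFun (List.ofFn_inj.mp hxy) ⟨i, hi⟩
    simpa using this
  refine ⟨Set.Finite.of_finite_image ?_ hinj,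
    Set.ncard_le_ncard_of_injOn f hmaps hinj (wordsOfLen_finite _ _)⟩
  exact (wordsOfLen_finite (language X) k).subset (by rintro _ ⟨x, hx, rfl⟩; exact hmaps x hx)

lemma PerN_eq (X : Set (FullShift p)) (n : ℕ) :
    PerN X n = ⋃ k ∈ Finset.Icc 1 n, fixSet X k := by
  ext x
  simp only [PerN, fixSet, Set.mem_setOf_eq, Set.mem_iUnion, Finset.mem_Icc, exists_prop]
  constructor
  · rintro ⟨hx, k, h1, h2, h3⟩; exact ⟨k, ⟨h1, h2⟩, hx, h3⟩
  · rintro ⟨k, ⟨h1, h2⟩, hx, h3⟩; exact ⟨hx, k, h1, h2, h3⟩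

lemma PerN_finite (X : Set (FullShift p)) (n : ℕ) : (PerN X n).Finite := by
  rw [PerN_eq]
  apply Set.Finite.biUnion (Finset.finite_toSet _)
  intro k hk
  simp only [Finset.coe_Icc, Set.mem_Icc] at hk
  exact (fixSet_stuff X (by omega)).1

lemma PerN_ncard_le (X : Set (FullShift p)) (n : ℕ) :
    (PerN X n).ncard ≤ ∑ k ∈ Finset.Icc 1 n, (wordsOfLen (language X) k).ncard := by
  rw [PerN_eq]
  refine le_trans (ncard_biUnion_le _ _) (Finset.sum_le_sum ?_)
  intro k hk
  simp only [Finset.mem_Icc] at hk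
  exact (fixSet_stuff X (by omega)).2

lemma PerN_mono (X : Set (FullShift p)) {m n : ℕ} (h : m ≤ n) : PerN X m ⊆ PerN X n := by
  rintro x ⟨hx, k, h1, h2, h3⟩
  exact ⟨hx, k, h1, h2.trans h, h3⟩

lemma term_nonneg (D : Set (List (Fin p))) (n : ℕ) :
    0 ≤ Real.log ((wordsOfLen D n).ncard) / n := by
  apply div_nonneg _ (Nat.cast_nonneg n)
  rcases Nat.eq_zero_or_pos (wordsOfLen D n).ncard with h | h
  · simp [h]
  · exact Real.log_nonneg (by exact_mod_cast h)

lemma term_le (hp : 0 < p) (D : Set (List (Fin p))) (n : ℕ) :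
    Real.log ((wordsOfLen D n).ncard) / n ≤ Real.log p := by
  have hlogp : 0 ≤ Real.log p := Real.log_nonneg (by exact_mod_cast hp)
  rcases Nat.eq_zero_or_pos n with rfl | hn
  · simpa using hlogp
  rcases Nat.eq_zero_or_pos (wordsOfLen D n).ncard with h | h
  · rw [h]
    simpa using hlogp
  · rw [div_le_iff₀ (by exact_mod_cast hn)]
    calc Real.log ((wordsOfLen D n).ncard) ≤ Real.log ((p ^ n : ℕ) : ℝ) := by
          apply Real.log_le_log (by exact_mod_cast h)
          exact_mod_cast wordsOfLen_ncard_le D n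
      _ = n * Real.log p := by
          push_cast
          rw [Real.log_pow]
      _ ≤ Real.log p * n := by ring_nf; exact le_rfl

lemma bdd_above_terms (hp : 0 < p) (D : Set (List (Fin p))) :
    Filter.IsBoundedUnder (· ≤ ·) Filter.atTop
      (fun n : ℕ => Real.log ((wordsOfLen D n).ncard) / n) :=
  Filter.isBoundedUnder_of ⟨Real.log p, term_le hp D⟩

lemma bdd_below_terms (D : Set (List (Fin p))) :
    Filter.IsBoundedUnder (· ≥ ·) Filter.atTop
      (fun n : ℕ => Real.log ((wordsOfLen D n).ncard) / n) :=
  Filter.isBoundedUnder_of ⟨0, term_nonneg D⟩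

lemma growth_nonneg (hp : 0 < p) (D : Set (List (Fin p))) : 0 ≤ growth D :=
  Filter.le_limsup_of_frequently_le (Filter.Frequently.of_forall (term_nonneg D))
    (bdd_above_terms hp D)

lemma count_le_exp (hp : 0 < p) (D : Set (List (Fin p))) {ε : ℝ} (hε : 0 < ε) :
    ∃ C : ℝ, 1 ≤ C ∧ ∀ n : ℕ,
      ((wordsOfLen D n).ncard : ℝ) ≤ C * Real.exp ((growth D + ε) * n) := by
  have hge : 0 ≤ growth D := growth_nonneg hp D
  have h1 : ∀ᶠ n : ℕ in Filter.atTop,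
      Real.log ((wordsOfLen D n).ncard) / n < growth D + ε :=
    Filter.eventually_lt_of_limsup_lt (lt_add_of_pos_right _ hε) (bdd_above_terms hp D)
  obtain ⟨N, hN⟩ := Filter.eventually_atTop.mp h1
  set M := max N 1 with hM
  set S : ℝ := ∑ k ∈ Finset.range M, ((wordsOfLen D k).ncard : ℝ) with hS
  have hS0 : 0 ≤ S := Finset.sum_nonneg fun k _ => Nat.cast_nonneg _
  refine ⟨S + 1, by linarith, ?_⟩
  intro n
  have hexp0 : 0 ≤ (growth D + ε) * n := by positivity
  have hexp1 : 1 ≤ Real.exp ((growth D + ε) * n) := Real.one_le_exp hexp0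
  rcases lt_or_ge n M with h | h
  · have h2 : ((wordsOfLen D n).ncard : ℝ) ≤ S :=
      Finset.single_le_sum (f := fun k => ((wordsOfLen D k).ncard : ℝ))
        (fun k _ => Nat.cast_nonneg _) (Finset.mem_range.mpr h)
    nlinarith
  · have hn1 : 1 ≤ n := le_trans (le_max_right N 1) h
    have hlt := hN n (le_trans (le_max_left N 1) h)
    rcases Nat.eq_zero_or_pos (wordsOfLen D n).ncard with hz | hpos
    · rw [hz]
      push_cast
      positivity
    · have hnR : (0 : ℝ) < n := by exact_mod_cast hn1
      have hlog : Real.log ((wordsOfLen D n).ncard) ≤ (growth D + ε) * n := by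
        rw [div_lt_iff₀ hnR] at hlt
        nlinarith
      calc ((wordsOfLen D n).ncard : ℝ)
          = Real.exp (Real.log ((wordsOfLen D n).ncard)) :=
            (Real.exp_log (by exact_mod_cast hpos)).symm
        _ ≤ Real.exp ((growth D + ε) * n) := Real.exp_le_exp.mpr hlog
        _ ≤ (S + 1) * Real.exp ((growth D + ε) * n) := by nlinarith [Real.exp_pos ((growth D + ε) * n)]

lemma t_const (c : ℝ) : Filter.Tendsto (fun n : ℕ => c / n) Filter.atTop (nhds 0) :=
  tendsto_const_div_atTop_nhds_zero_nat c

lemma t_log : Filter.Tendsto (fun n : ℕ => Real.log ((n : ℝ) + 1) / n) Filter.atTop (nhds 0) := by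
  have h0 : Filter.Tendsto (fun x : ℝ => Real.log x / x) Filter.atTop (nhds 0) :=
    Real.isLittleO_log_id_atTop.tendsto_div_nhds_zero
  have h1 : Filter.Tendsto (fun n : ℕ => (n : ℝ) + 1) Filter.atTop Filter.atTop :=
    Filter.tendsto_atTop_add_const_right _ 1 tendsto_natCast_atTop_atTop
  have h2 := h0.comp h1
  have h3 : Filter.Tendsto (fun n : ℕ => ((n : ℝ) + 1) / n) Filter.atTop (nhds 1) := by
    have h4 := (tendsto_const_nhds :
        Filter.Tendsto (fun _ : ℕ => (1 : ℝ)) Filter.atTop (nhds 1)).add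
      tendsto_one_div_atTop_nhds_zero_nat
    rw [add_zero] at h4
    apply h4.congr'
    filter_upwards [Filter.eventually_ge_atTop 1] with n hn
    have : (n : ℝ) ≠ 0 := by positivity
    field_simp
  have h5 := h2.mul h3
  rw [mul_one] at h5
  apply h5.congr'
  filter_upwards [Filter.eventually_ge_atTop 1] with n hn
  have hn0 : (n : ℝ) ≠ 0 := by positivity
  have hn1 : (n : ℝ) + 1 ≠ 0 := by positivity
  show Real.log ((n : ℝ) + 1) / ((n : ℝ) + 1) * (((n : ℝ) + 1) / n) = _
  field_simp

end AuxCT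
section AuxCT2

open Set Real Filter

variable {p : ℕ}

lemma ncard_language_le (X : Set (FullShift p)) {Cp G Cs : Set (List (Fin p))}
    (hdec : Decomp (language X) Cp G Cs) (n : ℕ) :
    (wordsOfLen (language X) n).ncard ≤
      ∑ q ∈ (Finset.range (n + 1) ×ˢ Finset.range (n + 1)).filter (fun q => q.1 + q.2 ≤ n),
        (wordsOfLen Cp q.1).ncard *
          ((wordsOfLen G (n - q.1 - q.2)).ncard * (wordsOfLen Cs q.2).ncard) := by
  classical
  obtain ⟨hCp, hG, hCs, hsplit⟩ := hdec
  choose! u v x hu hv hx heq using hsplit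
  set P := (Finset.range (n + 1) ×ˢ Finset.range (n + 1)).filter (fun q => q.1 + q.2 ≤ n)
    with hP
  set T : Set (List (Fin p) × List (Fin p) × List (Fin p)) :=
    ⋃ q ∈ P, (wordsOfLen Cp q.1) ×ˢ ((wordsOfLen G (n - q.1 - q.2)) ×ˢ (wordsOfLen Cs q.2))
    with hT
  have hTfin : T.Finite := by
    apply Set.Finite.biUnion (Finset.finite_toSet _)
    intro q _
    exact ((wordsOfLen_finite _ _).prod ((wordsOfLen_finite _ _).prod (wordsOfLen_finite _ _)))
  have hmaps : ∀ w ∈ wordsOfLen (language X) n, (u w, v w, x w) ∈ T := by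
    intro w hw
    have h1 := heq w hw.1
    have hlen : (u w).length + (v w).length + (x w).length = n := by
      have h2 := congrArg List.length h1
      have h3 := hw.2
      simp only [List.length_append] at h2
      omega
    have hvl : (v w).length = n - (u w).length - (x w).length := by omega
    refine Set.mem_iUnion₂.mpr ⟨((u w).length, (x w).length), ?_, ?_⟩
    · simp only [hP, Finset.mem_coe, Finset.mem_filter, Finset.mem_product, Finset.mem_range]
      omega
    · exact Set.mem_prod.mpr ⟨⟨hu w hw.1, rfl⟩,
        Set.mem_prod.mpr ⟨⟨hv w hw.1, hvl⟩, ⟨hx w hw.1, rfl⟩⟩⟩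
  have hinj : Set.InjOn (fun w => (u w, v w, x w)) (wordsOfLen (language X) n) := by
    intro w hw w' hw' h
    simp only [Prod.mk.injEq] at h
    rw [heq w hw.1, heq w' hw'.1, h.1, h.2.1, h.2.2]
  calc (wordsOfLen (language X) n).ncard ≤ T.ncard :=
        Set.ncard_le_ncard_of_injOn _ hmaps hinj hTfin
    _ ≤ ∑ q ∈ P, ((wordsOfLen Cp q.1) ×ˢ
          ((wordsOfLen G (n - q.1 - q.2)) ×ˢ (wordsOfLen Cs q.2))).ncard :=
        ncard_biUnion_le P _
    _ = _ := by
        apply Finset.sum_congr rfl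
        intro q _
        rw [ncard_prod', ncard_prod']

lemma htop_le_max {X : Set (FullShift p)} (hXne : X.Nonempty)
    {Cp G Cs : Set (List (Fin p))} (hdec : Decomp (language X) Cp G Cs) :
    htop X ≤ max (growth (Cp ∪ Cs)) (growth G) := by
  have hp : 0 < p := p_pos hXne
  set a := max (growth (Cp ∪ Cs)) (growth G) with ha
  have ha0 : 0 ≤ a := le_trans (growth_nonneg hp G) (le_max_right _ _)
  have key : ∀ ε : ℝ, 0 < ε → htop X ≤ a + ε := by
    intro ε hε
    obtain ⟨C₁, hC₁, hb₁⟩ := count_le_exp hp (Cp ∪ Cs) (half_pos hε)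
    obtain ⟨C₂, hC₂, hb₂⟩ := count_le_exp hp G (half_pos hε)
    set K : ℝ := C₁ * C₁ * C₂ with hK
    have hK1 : 1 ≤ K := by nlinarith
    have hCpb : ∀ i : ℕ, ((wordsOfLen Cp i).ncard : ℝ) ≤ C₁ * Real.exp ((a + ε / 2) * i) := by
      intro i
      refine le_trans ?_ (le_trans (hb₁ i) ?_)
      · have hsub : wordsOfLen Cp i ⊆ wordsOfLen (Cp ∪ Cs) i := fun w hw => ⟨Or.inl hw.1, hw.2⟩
        exact_mod_cast Set.ncard_le_ncard hsub (wordsOfLen_finite _ _)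
      · apply mul_le_mul_of_nonneg_left (Real.exp_le_exp.mpr ?_) (by linarith)
        apply mul_le_mul_of_nonneg_right _ (Nat.cast_nonneg i)
        have := le_max_left (growth (Cp ∪ Cs)) (growth G)
        linarith
    have hCsb : ∀ i : ℕ, ((wordsOfLen Cs i).ncard : ℝ) ≤ C₁ * Real.exp ((a + ε / 2) * i) := by
      intro i
      refine le_trans ?_ (le_trans (hb₁ i) ?_)
      · have hsub : wordsOfLen Cs i ⊆ wordsOfLen (Cp ∪ Cs) i := fun w hw => ⟨Or.inr hw.1, hw.2⟩
        exact_mod_cast Set.ncard_le_ncard hsub (wordsOfLen_finite _ _)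
      · apply mul_le_mul_of_nonneg_left (Real.exp_le_exp.mpr ?_) (by linarith)
        apply mul_le_mul_of_nonneg_right _ (Nat.cast_nonneg i)
        have := le_max_left (growth (Cp ∪ Cs)) (growth G)
        linarith
    have hGb : ∀ i : ℕ, ((wordsOfLen G i).ncard : ℝ) ≤ C₂ * Real.exp ((a + ε / 2) * i) := by
      intro i
      refine le_trans (hb₂ i) ?_
      apply mul_le_mul_of_nonneg_left (Real.exp_le_exp.mpr ?_) (by linarith)
      apply mul_le_mul_of_nonneg_right _ (Nat.cast_nonneg i)
      have := le_max_right (growth (Cp ∪ Cs)) (growth G)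
      linarith
    -- main counting bound
    have hmain : ∀ n : ℕ, ((wordsOfLen (language X) n).ncard : ℝ) ≤
        (((n : ℝ) + 1) ^ 2 * K) * Real.exp ((a + ε / 2) * n) := by
      intro n
      set P := (Finset.range (n + 1) ×ˢ Finset.range (n + 1)).filter (fun q => q.1 + q.2 ≤ n)
        with hP
      have hcard : (P.card : ℝ) ≤ ((n : ℝ) + 1) ^ 2 := by
        have h1 : P.card ≤ (n + 1) * (n + 1) := by
          calc P.card ≤ ((Finset.range (n + 1)) ×ˢ (Finset.range (n + 1))).card :=
                Finset.card_filter_le _ _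
            _ = (n + 1) * (n + 1) := by rw [Finset.card_product, Finset.card_range]
        have : ((P.card : ℝ)) ≤ ((n : ℝ) + 1) * ((n : ℝ) + 1) := by exact_mod_cast h1
        nlinarith
      have hterm : ∀ q ∈ P, ((wordsOfLen Cp q.1).ncard : ℝ) *
          (((wordsOfLen G (n - q.1 - q.2)).ncard : ℝ) * ((wordsOfLen Cs q.2).ncard : ℝ)) ≤
          K * Real.exp ((a + ε / 2) * n) := by
        intro q hq
        simp only [hP, Finset.mem_filter, Finset.mem_product, Finset.mem_range] at hq
        have hsum : (q.1 : ℝ) + ((n - q.1 - q.2 : ℕ) : ℝ) + (q.2 : ℝ) = n := by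
          have : q.1 + (n - q.1 - q.2) + q.2 = n := by omega
          exact_mod_cast this
        have h1 := hCpb q.1
        have h2 := hGb (n - q.1 - q.2)
        have h3 := hCsb q.2
        have e1 : Real.exp ((a + ε / 2) * q.1) * (Real.exp ((a + ε / 2) * (n - q.1 - q.2 : ℕ)) *
            Real.exp ((a + ε / 2) * q.2)) = Real.exp ((a + ε / 2) * n) := by
          rw [← Real.exp_add, ← Real.exp_add]
          congr 1
          linear_combination (a + ε / 2) * hsum
        calc ((wordsOfLen Cp q.1).ncard : ℝ) *
              (((wordsOfLen G (n - q.1 - q.2)).ncard : ℝ) * ((wordsOfLen Cs q.2).ncard : ℝ))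
            ≤ (C₁ * Real.exp ((a + ε / 2) * q.1)) *
              ((C₂ * Real.exp ((a + ε / 2) * (n - q.1 - q.2 : ℕ))) *
                (C₁ * Real.exp ((a + ε / 2) * q.2))) := by
              apply mul_le_mul h1 _ (by positivity) (by positivity)
              apply mul_le_mul h2 h3 (by positivity) (by positivity)
          _ = K * (Real.exp ((a + ε / 2) * q.1) * (Real.exp ((a + ε / 2) * (n - q.1 - q.2 : ℕ)) *
                Real.exp ((a + ε / 2) * q.2))) := by ring
          _ = K * Real.exp ((a + ε / 2) * n) := by rw [e1]
      calc ((wordsOfLen (language X) n).ncard : ℝ)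
          ≤ ∑ q ∈ P, ((wordsOfLen Cp q.1).ncard : ℝ) *
              (((wordsOfLen G (n - q.1 - q.2)).ncard : ℝ) * ((wordsOfLen Cs q.2).ncard : ℝ)) := by
            exact_mod_cast ncard_language_le X hdec n
        _ ≤ ∑ _q ∈ P, K * Real.exp ((a + ε / 2) * n) := Finset.sum_le_sum hterm
        _ = (P.card : ℝ) * (K * Real.exp ((a + ε / 2) * n)) := by
            rw [Finset.sum_const, nsmul_eq_mul]
        _ ≤ (((n : ℝ) + 1) ^ 2) * (K * Real.exp ((a + ε / 2) * n)) := by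
            apply mul_le_mul_of_nonneg_right hcard (by positivity)
        _ = (((n : ℝ) + 1) ^ 2 * K) * Real.exp ((a + ε / 2) * n) := by ring
    -- take logs
    have hev : ∀ᶠ n : ℕ in Filter.atTop,
        Real.log ((wordsOfLen (language X) n).ncard) / n ≤ a + ε := by
      have htend : Filter.Tendsto
          (fun n : ℕ => 2 * (Real.log ((n : ℝ) + 1) / n) + Real.log K / n)
          Filter.atTop (nhds 0) := by
        have := (t_log.const_mul 2).add (t_const (Real.log K))
        simpa using this
      filter_upwards [htend.eventually_le_const (half_pos hε),
        Filter.eventually_ge_atTop 1] with n h1 hn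
      have hnR : (0 : ℝ) < n := by exact_mod_cast hn
      have hcnt : 1 ≤ (wordsOfLen (language X) n).ncard := one_le_ncard_language hXne n
      have hlog := Real.log_le_log (by exact_mod_cast hcnt) (hmain n)
      have hne1 : (((n : ℝ) + 1) ^ 2 * K) ≠ 0 := by positivity
      rw [Real.log_mul hne1 (Real.exp_ne_zero _), Real.log_exp,
        Real.log_mul (by positivity) (by linarith), Real.log_pow] at hlog
      rw [div_le_iff₀ hnR]
      have h2 : 2 * (Real.log ((n : ℝ) + 1) / n) + Real.log K / n ≤ ε / 2 := h1
      have h3 : 2 * Real.log ((n : ℝ) + 1) + Real.log K ≤ ε / 2 * n := by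
        rw [← sub_nonneg]
        have : ε / 2 * n - (2 * Real.log ((n : ℝ) + 1) + Real.log K)
            = (ε / 2 - (2 * (Real.log ((n : ℝ) + 1) / n) + Real.log K / n)) * n := by
          field_simp
        rw [this]
        apply mul_nonneg (by linarith) hnR.le
      push_cast at hlog
      nlinarith
    have hcb : Filter.IsCoboundedUnder (· ≤ ·) Filter.atTop
        (fun n : ℕ => Real.log ((wordsOfLen (language X) n).ncard) / n) :=
      Filter.IsBoundedUnder.isCoboundedUnder_le (bdd_below_terms _)
    exact Filter.limsup_le_of_le hcb hev
  by_contra hcon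
  push_neg at hcon
  have := key ((htop X - a) / 2) (by linarith)
  linarith

end AuxCT2
section AuxCT3

open Set Real Filter

variable {p : ℕ}

lemma per_lower {X : Set (FullShift p)} {G : Set (List (Fin p))} {t : ℕ}
    (hspec : HasSpecPer X G t) {n0 : ℕ} (hn0 : 1 ≤ n0) (m : ℕ) :
    (wordsOfLen G n0).ncard ^ (m + 1) ≤ (PerN X ((m + 1) * (n0 + t))).ncard := by
  classical
  rcases (wordsOfLen G n0).eq_empty_or_nonempty with hS | hS
  · simp [hS]
  obtain ⟨s0, hs0⟩ := hS
  set S := wordsOfLen G n0 with hSdef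
  have key : ∀ f : Fin (m + 1) → S, ∃ (z : FullShift p) (g : List (Fin p)),
      z ∈ X ∧ g.length = (m + 1) * n0 + m * t ∧ shiftMap^[g.length + t] z = z ∧
      z ∈ centralCylinder g ∧
      ∃ v : ℕ → List (Fin p), (∀ i < m, (v i).length = t) ∧
        g = glueWords m
          (fun i => if h : i < m + 1 then (f ⟨i, h⟩ : List (Fin p)) else (s0 : List (Fin p)))
          v := by
    intro f
    set w : ℕ → List (Fin p) :=
      fun i => if h : i < m + 1 then (f ⟨i, h⟩ : List (Fin p)) else (s0 : List (Fin p))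
      with hw
    have hwG : ∀ i ≤ m, w i ∈ G := by
      intro i hi
      simp only [hw]
      rw [dif_pos (by omega)]
      exact (f ⟨i, by omega⟩).2.1
    have hwlen : ∀ i ≤ m, (w i).length = n0 := by
      intro i hi
      simp only [hw]
      rw [dif_pos (by omega)]
      exact (f ⟨i, by omega⟩).2.2
    obtain ⟨v, hv, _, z, hzX, hzper, hzcyl⟩ := hspec m w hwG
    exact ⟨z, glueWords m w v, hzX,
      glueWords_length m w v n0 t hwlen (fun i hi => (hv i hi).2), hzper, hzcyl, v,
      (fun i hi => (hv i hi).2), rfl⟩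
  choose z g hzX hglen hzper hzcyl v hvlen hgeq using key
  have hmem : ∀ f, z f ∈ PerN X ((m + 1) * (n0 + t)) := by
    intro f
    refine ⟨hzX f, (g f).length + t, by rw [hglen f]; nlinarith, ?_, hzper f⟩
    rw [hglen f]
    have : (m + 1) * (n0 + t) = (m + 1) * n0 + m * t + t := by ring
    omega
  have hinj : Function.Injective (fun f : Fin (m + 1) → S => z f) := by
    intro f f' hzz
    simp only at hzz
    have hgg : g f = g f' := by
      refine centralCylinder_word_eq (hzcyl f) ?_ (by rw [hglen f, hglen f'])
      rw [hzz]
      exact hzcyl f'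
    rw [hgeq f, hgeq f'] at hgg
    have hww := glueWords_inj m _ _ _ _
      (fun i hi => by
        rw [dif_pos (by omega : i < m + 1), dif_pos (by omega : i < m + 1)]
        rw [(f ⟨i, by omega⟩).2.2, (f' ⟨i, by omega⟩).2.2])
      (fun i hi => by rw [hvlen f i hi, hvlen f' i hi])
      hgg
    funext i
    have h1 := hww i.val (by omega)
    rw [dif_pos i.isLt, dif_pos i.isLt] at h1
    apply Subtype.ext
    simpa using h1
  have hfinPer : (PerN X ((m + 1) * (n0 + t))).Finite := PerN_finite X _
  haveI := hfinPer.to_subtype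
  have hcard : Nat.card (Fin (m + 1) → S) ≤ Nat.card (PerN X ((m + 1) * (n0 + t))) := by
    apply Nat.card_le_card_of_injective
      (fun f : Fin (m + 1) → S => (⟨z f, hmem f⟩ : PerN X ((m + 1) * (n0 + t))))
    intro f f' h
    exact hinj (congrArg Subtype.val h)
  rwa [Nat.card_fun, Nat.card_coe_set_eq, Nat.card_coe_set_eq,
    Nat.card_eq_fintype_card, Fintype.card_fin] at hcard

end AuxCT3
set_option maxHeartbeats 1000000 in
/-- **Section 5.6.** Under Conditions (I) and (II), if `𝓖` has (Per)-specification, then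
`lim (1/n) log #Per(n) = h(𝓛) = h_top(X,σ)`. -/
theorem periodic_growth_eq_entropy {p : ℕ} (X : Set (FullShift p))
    (hX : IsShiftSpace X) (Cp G Cs : Set (List (Fin p)))
    (hdec : Decomp (language X) Cp G Cs)
    (hI : ∃ t : ℕ, HasSpecS (language X) G t)
    (hII : growth (Cp ∪ Cs) < htop X)
    (hPer : ∃ t : ℕ, HasSpecPer X G t) :
    Filter.Tendsto (fun n : ℕ => Real.log ((PerN X n).ncard) / n)
      Filter.atTop (nhds (htop X)) := by
  classical
  obtain ⟨hXne, -, -⟩ := hX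
  have hp : 0 < p := p_pos hXne
  obtain ⟨t, hspec⟩ := hPer
  have hXg : growth (language X) = htop X := rfl
  have hh0 : 0 ≤ htop X := growth_nonneg hp _
  set u : ℕ → ℝ := fun n => Real.log ((PerN X n).ncard) / n with hu
  have hu0 : ∀ n, 0 ≤ u n := by
    intro n
    apply div_nonneg _ (Nat.cast_nonneg n)
    rcases Nat.eq_zero_or_pos (PerN X n).ncard with h | h
    · simp [h]
    · exact Real.log_nonneg (by exact_mod_cast h)
  have hbddB : Filter.IsBoundedUnder (· ≥ ·) Filter.atTop u :=
    Filter.isBoundedUnder_of ⟨0, hu0⟩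
  -- eventual upper bound
  have Hev : ∀ ε : ℝ, 0 < ε → ∀ᶠ n : ℕ in Filter.atTop, u n ≤ htop X + ε := by
    intro ε hε
    obtain ⟨C, hC1, hCb⟩ := count_le_exp hp (language X) (half_pos hε)
    rw [hXg] at hCb
    have hC0 : (0 : ℝ) < C := by linarith
    have htend : Filter.Tendsto
        (fun n : ℕ => Real.log ((n : ℝ) + 1) / n + Real.log C / n)
        Filter.atTop (nhds 0) := by
      have := t_log.add (t_const (Real.log C))
      simpa using this
    filter_upwards [htend.eventually_le_const (half_pos hε),
      Filter.eventually_ge_atTop 1] with n h1 hn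
    rcases Nat.eq_zero_or_pos (PerN X n).ncard with hz | hpos
    · simp only [hu, hz, Nat.cast_zero, Real.log_zero, zero_div]
      linarith
    · have hnR : (0 : ℝ) < n := by exact_mod_cast hn
      have hcount : ((PerN X n).ncard : ℝ) ≤
          ((n : ℝ) + 1) * (C * Real.exp ((htop X + ε / 2) * n)) := by
        calc ((PerN X n).ncard : ℝ)
            ≤ ∑ k ∈ Finset.Icc 1 n, ((wordsOfLen (language X) k).ncard : ℝ) := by
              exact_mod_cast PerN_ncard_le X n
          _ ≤ ∑ _k ∈ Finset.Icc 1 n, C * Real.exp ((htop X + ε / 2) * n) := by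
              apply Finset.sum_le_sum
              intro k hk
              refine le_trans (hCb k) ?_
              apply mul_le_mul_of_nonneg_left (Real.exp_le_exp.mpr ?_) hC0.le
              apply mul_le_mul_of_nonneg_left ?_ (by linarith)
              exact_mod_cast (Finset.mem_Icc.mp hk).2
          _ = ((Finset.Icc 1 n).card : ℝ) * (C * Real.exp ((htop X + ε / 2) * n)) := by
              rw [Finset.sum_const, nsmul_eq_mul]
          _ ≤ ((n : ℝ) + 1) * (C * Real.exp ((htop X + ε / 2) * n)) := by
              apply mul_le_mul_of_nonneg_right _ (by positivity)
              rw [Nat.card_Icc]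
              push_cast
              simp
      have hlog := Real.log_le_log (by exact_mod_cast hpos) hcount
      rw [Real.log_mul (by positivity) (by positivity),
        Real.log_mul hC0.ne' (Real.exp_ne_zero _), Real.log_exp] at hlog
      have h3 : Real.log ((n : ℝ) + 1) + Real.log C ≤ ε / 2 * n := by
        rw [← sub_nonneg]
        have e : ε / 2 * n - (Real.log ((n : ℝ) + 1) + Real.log C)
            = (ε / 2 - (Real.log ((n : ℝ) + 1) / n + Real.log C / n)) * n := by
          field_simp
        rw [e]
        exact mul_nonneg (by linarith) hnR.le
      show Real.log ((PerN X n).ncard) / n ≤ htop X + ε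
      rw [div_le_iff₀ hnR]
      nlinarith
  have hbddA : Filter.IsBoundedUnder (· ≤ ·) Filter.atTop u :=
    Filter.isBoundedUnder_of_eventually_le (Hev 1 one_pos)
  have hupper : Filter.limsup u Filter.atTop ≤ htop X := by
    by_contra hcon
    push_neg at hcon
    have h1 := Filter.limsup_le_of_le hbddB.isCoboundedUnder_le
      (Hev ((Filter.limsup u Filter.atTop - htop X) / 2) (by linarith))
    linarith
  -- lower bound
  have hGge : htop X ≤ growth G := by
    have h1 := htop_le_max hXne hdec
    rcases max_cases (growth (Cp ∪ Cs)) (growth G) with ⟨heq, -⟩ | ⟨heq, -⟩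
    · rw [heq] at h1; linarith
    · rwa [heq] at h1
  have Hev2 : ∀ ε : ℝ, 0 < ε → htop X - ε ≤ Filter.liminf u Filter.atTop := by
    intro ε hε
    by_cases hcase : htop X ≤ ε
    · have h0 : (0 : ℝ) ≤ Filter.liminf u Filter.atTop :=
        Filter.le_liminf_of_le hbddA.isCoboundedUnder_ge (Filter.Eventually.of_forall hu0)
      linarith
    push_neg at hcase
    have hfreq : ∃ᶠ n in Filter.atTop,
        htop X - ε / 2 < Real.log ((wordsOfLen G n).ncard) / n :=
      Filter.frequently_lt_of_lt_limsup (bdd_below_terms G).isCoboundedUnder_le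
        (lt_of_lt_of_le (by linarith) hGge)
    obtain ⟨N₁, hN₁⟩ := exists_nat_ge (2 * htop X * t / ε)
    obtain ⟨n0, hn0ge, hn0lt⟩ := Filter.frequently_atTop.mp hfreq (max N₁ 1)
    have hn01 : 1 ≤ n0 := le_trans (le_max_right N₁ 1) hn0ge
    have hn0R : (0 : ℝ) < n0 := by exact_mod_cast hn01
    set c := Real.log ((wordsOfLen G n0).ncard) with hc
    have hc1 : (htop X - ε / 2) * n0 < c := (lt_div_iff₀ hn0R).mp hn0lt
    have hcpos : 0 < c := lt_of_le_of_lt (by nlinarith) hc1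
    have hcard1 : 1 ≤ (wordsOfLen G n0).ncard := by
      by_contra hcon
      push_neg at hcon
      have hz : (wordsOfLen G n0).ncard = 0 := by omega
      rw [hc, hz] at hcpos
      simp at hcpos
    have hNn : (N₁ : ℝ) ≤ n0 := by exact_mod_cast le_trans (le_max_left N₁ 1) hn0ge
    have hht : 2 * htop X * t ≤ ε * N₁ := by
      rw [div_le_iff₀ hε] at hN₁
      linarith
    have hcK : (htop X - ε) * ((n0 : ℝ) + t) ≤ c := by
      nlinarith [mul_nonneg hε.le (Nat.cast_nonneg t : (0 : ℝ) ≤ (t : ℝ))]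
    set K := n0 + t with hKdef
    have hK1 : 1 ≤ K := by omega
    have hKR : (0 : ℝ) < (K : ℝ) := by exact_mod_cast hK1
    have hKcast : ((K : ℕ) : ℝ) = (n0 : ℝ) + t := by
      rw [hKdef]; push_cast; ring
    have hev : ∀ᶠ n in Filter.atTop, c / K - c / n ≤ u n := by
      filter_upwards [Filter.eventually_ge_atTop K] with n hn
      have hq1 : 1 ≤ n / K := (Nat.one_le_div_iff (by omega)).mpr hn
      set q := n / K with hqdef
      have hqK : q * K ≤ n := Nat.div_mul_le_self n K
      have hnq : n < q * K + K := by
        have h1 : K * q + n % K = n := by rw [hqdef]; exact Nat.div_add_mod n K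
        have h2 : n % K < K := Nat.mod_lt n (by omega)
        have h3 : K * q = q * K := Nat.mul_comm K q
        omega
      have hple : (wordsOfLen G n0).ncard ^ q ≤ (PerN X n).ncard := by
        have h1 := per_lower hspec hn01 (q - 1)
        rw [Nat.sub_add_cancel hq1] at h1
        exact le_trans h1 (Set.ncard_le_ncard (PerN_mono X hqK) (PerN_finite X n))
      have hnR : (0 : ℝ) < n := by exact_mod_cast (by omega : 0 < n)
      have hlog : (q : ℝ) * c ≤ Real.log ((PerN X n).ncard) := by
        have h2 : ((wordsOfLen G n0).ncard : ℝ) ^ q ≤ ((PerN X n).ncard : ℝ) := by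
          exact_mod_cast hple
        have hb1 : (0 : ℝ) < ((wordsOfLen G n0).ncard : ℝ) ^ q := by
          apply pow_pos
          exact_mod_cast hcard1
        have h3 := Real.log_le_log hb1 h2
        rwa [Real.log_pow] at h3
      have hqlb : (n : ℝ) / K - 1 ≤ (q : ℝ) := by
        have h4 : (n : ℝ) < ((q : ℝ) + 1) * K := by
          have : (n : ℝ) < ((q * K + K : ℕ) : ℝ) := by exact_mod_cast hnq
          push_cast at this
          nlinarith
        have h5 : (n : ℝ) / K ≤ (q : ℝ) + 1 := by
          rw [div_le_iff₀ hKR]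
          nlinarith
        linarith
      show c / K - c / n ≤ Real.log ((PerN X n).ncard) / n
      have h4 : ((n : ℝ) / K - 1) * c ≤ (q : ℝ) * c := mul_le_mul_of_nonneg_right hqlb hcpos.le
      have h5 : ((n : ℝ) / K - 1) * c / n = c / K - c / n := by
        field_simp
      calc c / K - c / n = ((n : ℝ) / K - 1) * c / n := h5.symm
        _ ≤ (q : ℝ) * c / n := (div_le_div_iff_of_pos_right hnR).mpr h4
        _ ≤ Real.log ((PerN X n).ncard) / n := (div_le_div_iff_of_pos_right hnR).mpr hlog
    have h2 : Filter.Tendsto (fun n : ℕ => c / K - c / n) Filter.atTop (nhds (c / K)) := by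
      have := (tendsto_const_nhds :
        Filter.Tendsto (fun _ : ℕ => c / (K : ℝ)) Filter.atTop (nhds (c / K))).sub (t_const c)
      simpa using this
    have hbl : Filter.IsBoundedUnder (· ≥ ·) Filter.atTop (fun n : ℕ => c / K - c / n) := by
      apply Filter.isBoundedUnder_of
      refine ⟨c / K - c, ?_⟩
      intro n
      have h6 : c / n ≤ c := by
        rcases Nat.eq_zero_or_pos n with rfl | hn
        · simpa using hcpos.le
        · exact div_le_self hcpos.le (by exact_mod_cast hn)
      show c / K - c ≤ c / K - c / n
      linarith
    have h3 : c / K ≤ Filter.liminf u Filter.atTop := by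
      have h4 := Filter.liminf_le_liminf hev hbl hbddA.isCoboundedUnder_ge
      rwa [h2.liminf_eq] at h4
    have h5 : htop X - ε ≤ c / K := by
      rw [le_div_iff₀ hKR, hKcast]
      exact hcK
    linarith
  have hlower : htop X ≤ Filter.liminf u Filter.atTop := by
    by_contra hcon
    push_neg at hcon
    have := Hev2 ((htop X - Filter.liminf u Filter.atTop) / 2) (by linarith)
    linarith
  exact tendsto_of_le_liminf_of_limsup_le hlower hupper hbddA hbddB
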